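/- Let T be a dynamic attack tree with durations d. For every time assignment f ∈ F_T (satisfying the defining inequalities at each node) there is an exact time assignment f' (satisfying equality in the OR and AND constraints, and equality in the SAND constraint whenever the infinity-forcing conditions do not hold) such that f'_{R} ≤ f_{R}, where R is the root. Consequently min_{f ∈ F_T} f_R = min_{f ∈ F_{E,T}} f_R. -/

import Mathlib

open scoped ENNReal

/-- A dynamic attack tree: leaves are basic attack steps (BAS), internal
nodes are OR / AND / SAND gates with a list of children (ordered, which
matters for SAND).  DAG-sharing is modelled by shared BAS labels /
shared subterms. -/
inductive DAT (α : Type) : Type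
  | bas (a : α) : DAT α
  | or (cs : List (DAT α)) : DAT α
  | and (cs : List (DAT α)) : DAT α
  | sand (cs : List (DAT α)) : DAT α

namespace DAT

variable {α : Type}

/-- `IsBasDesc v a` : the BAS `a` is a descendant of node `v` (i.e. `a ∈ B_v`). -/
inductive IsBasDesc : DAT α → α → Prop
  | bas (a : α) : IsBasDesc (.bas a) a
  | or {cs : List (DAT α)} {c : DAT α} {a : α} : c ∈ cs → IsBasDesc c a → IsBasDesc (.or cs) a
  | and {cs : List (DAT α)} {c : DAT α} {a : α} : c ∈ cs → IsBasDesc c a → IsBasDesc (.and cs) a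
  | sand {cs : List (DAT α)} {c : DAT α} {a : α} : c ∈ cs → IsBasDesc c a → IsBasDesc (.sand cs) a

/-- `Subnode v T` : `v` is a node of the DAT `T` (a subterm). -/
inductive Subnode : DAT α → DAT α → Prop
  | refl (t : DAT α) : Subnode t t
  | or {v c : DAT α} {cs : List (DAT α)} : c ∈ cs → Subnode v c → Subnode v (.or cs)
  | and {v c : DAT α} {cs : List (DAT α)} : c ∈ cs → Subnode v c → Subnode v (.and cs)
  | sand {v c : DAT α} {cs : List (DAT α)} : c ∈ cs → Subnode v c → Subnode v (.sand cs)

/-- `Reaches A r v` : the attack given by the set `A` of activated BASes and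
the strict order `r` on them reaches node `v`. -/
inductive Reaches (A : Set α) (r : α → α → Prop) : DAT α → Prop
  | bas {a : α} : a ∈ A → Reaches A r (.bas a)
  | or {cs : List (DAT α)} {c : DAT α} : c ∈ cs → Reaches A r c → Reaches A r (.or cs)
  | and {cs : List (DAT α)} : (∀ c ∈ cs, Reaches A r c) → Reaches A r (.and cs)
  | sand {cs : List (DAT α)} :
      (∀ c ∈ cs, Reaches A r c) →
      (∀ i, (h : i + 1 < cs.length) → ∀ a a', a ∈ A → a' ∈ A →
        IsBasDesc (cs.get ⟨i, Nat.lt_of_succ_lt h⟩) a →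
        IsBasDesc (cs.get ⟨i + 1, h⟩) a' → r a a') →
      Reaches A r (.sand cs)

end DAT

/-- An attack: a finite set of BASes together with a strict partial order on it. -/
structure Attack (α : Type) where
  carrier : Finset α
  lt : α → α → Prop
  lt_mem : ∀ {a b : α}, lt a b → a ∈ carrier ∧ b ∈ carrier
  lt_irrefl : ∀ a, ¬ lt a a
  lt_trans : ∀ {a b c : α}, lt a b → lt b c → lt a c

namespace Attack

variable {α : Type}

/-- The order on attacks: inclusion of carriers and of order relations. -/
def le (O O' : Attack α) : Prop :=
  O.carrier ⊆ O'.carrier ∧ ∀ a b, O.lt a b → O'.lt a b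

end Attack

namespace DAT

variable {α : Type}

/-- A maximal chain of the strict poset with carrier `A` and order `r`. -/
def MaxChain (A : Set α) (r : α → α → Prop) (C : Finset α) : Prop :=
  ↑C ⊆ A ∧ IsChain r ↑C ∧
    ∀ C' : Finset α, ↑C' ⊆ A → IsChain r ↑C' → C ⊆ C' → C' = C

/-- Duration `t(O, d)` of an attack: the maximum over maximal chains of the
sum of the durations. -/
noncomputable def dur (A : Set α) (r : α → α → Prop) (d : α → ℝ≥0∞) : ℝ≥0∞ :=
  ⨆ C ∈ {C : Finset α | MaxChain A r C}, ∑ a ∈ C, d a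

/-- An attack is successful on `T` if it reaches the root of `T`. -/
def Successful (O : Attack α) (T : DAT α) : Prop :=
  Reaches (↑O.carrier) O.lt T

/-- Min time: the infimum of the durations of successful attacks (`∞` if there
are none). -/
noncomputable def mt (T : DAT α) (d : α → ℝ≥0∞) : ℝ≥0∞ :=
  ⨅ O ∈ {O : Attack α | Successful O T}, dur (↑O.carrier) O.lt d

end DAT

namespace DAT

variable {α : Type}

/-- The bottom-up algorithm MT-BU. -/
noncomputable def BU (d : α → ℝ≥0∞) : DAT α → ℝ≥0∞
  | .bas a => d a
  | .or cs => (cs.attach.map (fun c => BU d c.1)).foldr min ⊤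
  | .and cs => (cs.attach.map (fun c => BU d c.1)).foldr max 0
  | .sand cs => (cs.attach.map (fun c => BU d c.1)).sum
  decreasing_by all_goals (simp_wf; have := List.sizeOf_lt_of_mem c.2; omega)

/-- A static attack tree: no SAND gates. -/
inductive IsStatic : DAT α → Prop
  | bas (a : α) : IsStatic (.bas a)
  | or {cs : List (DAT α)} : (∀ c ∈ cs, IsStatic c) → IsStatic (.or cs)
  | and {cs : List (DAT α)} : (∀ c ∈ cs, IsStatic c) → IsStatic (.and cs)

/-- Reachability for a plain set of BASes (static semantics, no order needed). -/
inductive ReachSet (A : Set α) : DAT α → Prop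
  | bas {a : α} : a ∈ A → ReachSet A (.bas a)
  | or {cs : List (DAT α)} {c : DAT α} : c ∈ cs → ReachSet A c → ReachSet A (.or cs)
  | and {cs : List (DAT α)} : (∀ c ∈ cs, ReachSet A c) → ReachSet A (.and cs)

/-- List of the BAS labels occurring in a DAT, with multiplicity. -/
def basList : DAT α → List α
  | .bas a => [a]
  | .or cs => (cs.attach.map (fun c => basList c.1)).flatten
  | .and cs => (cs.attach.map (fun c => basList c.1)).flatten
  | .sand cs => (cs.attach.map (fun c => basList c.1)).flatten
  decreasing_by all_goals (simp_wf; have := List.sizeOf_lt_of_mem c.2; omega)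

/-- The "bad" condition forcing a SAND node to `∞`: some child is not reached,
or some pair of BASes of consecutive children violates the ordering constraint. -/
def SandBad (d : α → ℝ≥0∞) (f : DAT α → ℝ≥0∞) (cs : List (DAT α)) : Prop :=
  (∃ c ∈ cs, f c = ⊤) ∨
    ∃ i, ∃ h : i + 1 < cs.length, ∃ a a',
      IsBasDesc (cs.get ⟨i, Nat.lt_of_succ_lt h⟩) a ∧
      IsBasDesc (cs.get ⟨i + 1, h⟩) a' ∧
      f (.bas a') - d a' < f (.bas a) ∧ f (.bas a) < ⊤

/-- Local time-assignment constraints at a node. -/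
def LocalTA (d : α → ℝ≥0∞) (f : DAT α → ℝ≥0∞) : DAT α → Prop
  | .bas a => d a ≤ f (.bas a)
  | .or cs => (⨅ c ∈ cs, f c) ≤ f (.or cs)
  | .and cs => (⨆ c ∈ cs, f c) ≤ f (.and cs)
  | .sand cs =>
      (∀ c, cs.getLast? = some c → f c ≤ f (.sand cs)) ∧
      (SandBad d f cs → f (.sand cs) = ⊤)

/-- Local exact time-assignment constraints at a node. -/
def LocalExact (d : α → ℝ≥0∞) (f : DAT α → ℝ≥0∞) : DAT α → Prop
  | .bas a => d a ≤ f (.bas a)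
  | .or cs => f (.or cs) = ⨅ c ∈ cs, f c
  | .and cs => f (.and cs) = ⨆ c ∈ cs, f c
  | .sand cs =>
      (SandBad d f cs → f (.sand cs) = ⊤) ∧
      (¬ SandBad d f cs → ∀ c, cs.getLast? = some c → f (.sand cs) = f c)

/-- `f` is a time assignment for `T`. -/
def IsTA (d : α → ℝ≥0∞) (f : DAT α → ℝ≥0∞) (T : DAT α) : Prop :=
  ∀ v, Subnode v T → LocalTA d f v

/-- `f` is an exact time assignment for `T`. -/
def IsExactTA (d : α → ℝ≥0∞) (f : DAT α → ℝ≥0∞) (T : DAT α) : Prop :=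
  ∀ v, Subnode v T → LocalExact d f v

end DAT


namespace DAT

variable {α : Type}

open Classical in
/-- Exactification of a time assignment. -/
noncomputable def exact (d : α → ℝ≥0∞) (f : DAT α → ℝ≥0∞) : DAT α → ℝ≥0∞
  | .bas a => f (.bas a)
  | .or cs => ⨅ c ∈ cs.attach, exact d f c.1
  | .and cs => ⨆ c ∈ cs.attach, exact d f c.1
  | .sand cs =>
      if ((∃ c ∈ cs.attach, exact d f c.1 = ⊤) ∨
          ∃ i, ∃ h : i + 1 < cs.length, ∃ a a',
            IsBasDesc (cs.get ⟨i, Nat.lt_of_succ_lt h⟩) a ∧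
            IsBasDesc (cs.get ⟨i + 1, h⟩) a' ∧
            f (.bas a') - d a' < f (.bas a) ∧ f (.bas a) < ⊤)
      then ⊤ else (cs.attach.map (fun c => exact d f c.1)).getLast?.getD 0
  decreasing_by all_goals (simp_wf; first
    | (have := List.sizeOf_lt_of_mem c.2; omega)
    | (have := List.sizeOf_lt_of_mem a.2; omega))

lemma exact_bas (d : α → ℝ≥0∞) (f : DAT α → ℝ≥0∞) (a : α) :
    exact d f (.bas a) = f (.bas a) := by rw [exact]

lemma exact_or (d : α → ℝ≥0∞) (f : DAT α → ℝ≥0∞) (cs : List (DAT α)) :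
    exact d f (.or cs) = ⨅ c ∈ cs, exact d f c := by
  rw [exact]
  rw [iInf_subtype']
  simp [iInf_subtype]

lemma exact_and (d : α → ℝ≥0∞) (f : DAT α → ℝ≥0∞) (cs : List (DAT α)) :
    exact d f (.and cs) = ⨆ c ∈ cs, exact d f c := by
  rw [exact]
  rw [iSup_subtype']
  simp [iSup_subtype]

lemma sandBad_exact_iff (d : α → ℝ≥0∞) (f : DAT α → ℝ≥0∞) (cs : List (DAT α)) :
    SandBad d (exact d f) cs ↔
      ((∃ c ∈ cs.attach, exact d f c.1 = ⊤) ∨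
        ∃ i, ∃ h : i + 1 < cs.length, ∃ a a',
          IsBasDesc (cs.get ⟨i, Nat.lt_of_succ_lt h⟩) a ∧
          IsBasDesc (cs.get ⟨i + 1, h⟩) a' ∧
          f (.bas a') - d a' < f (.bas a) ∧ f (.bas a) < ⊤) := by
  unfold SandBad
  simp only [exact_bas, List.mem_attach, true_and]
  constructor
  · rintro (⟨c, hc, h⟩ | h)
    · exact Or.inl ⟨⟨c, hc⟩, h⟩
    · exact Or.inr h
  · rintro (⟨⟨c, hc⟩, h⟩ | h)
    · exact Or.inl ⟨c, hc, h⟩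
    · exact Or.inr h

lemma exact_sand_bad (d : α → ℝ≥0∞) (f : DAT α → ℝ≥0∞) (cs : List (DAT α))
    (h : SandBad d (exact d f) cs) : exact d f (.sand cs) = ⊤ := by
  rw [exact, if_pos ((sandBad_exact_iff d f cs).1 h)]

lemma exact_sand_good (d : α → ℝ≥0∞) (f : DAT α → ℝ≥0∞) (cs : List (DAT α))
    (h : ¬ SandBad d (exact d f) cs) {c : DAT α} (hc : cs.getLast? = some c) :
    exact d f (.sand cs) = exact d f c := by
  rw [exact, if_neg (fun h' => h ((sandBad_exact_iff d f cs).2 h'))]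
  have : cs.attach.map (fun c => exact d f c.1) = cs.map (exact d f) :=
    List.attach_map_val (l := cs) (f := exact d f)
  rw [this, List.getLast?_map, hc]
  rfl

lemma isExactTA_exact (d : α → ℝ≥0∞) (f : DAT α → ℝ≥0∞) (T : DAT α)
    (hf : IsTA d f T) : IsExactTA d (exact d f) T := by
  intro v hv
  match v with
  | .bas a =>
      show d a ≤ exact d f (.bas a)
      rw [exact_bas]
      exact hf _ hv
  | .or cs => exact exact_or d f cs
  | .and cs => exact exact_and d f cs
  | .sand cs =>
      exact ⟨exact_sand_bad d f cs, fun h c hc => exact_sand_good d f cs h hc⟩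

lemma isTA_of_isExactTA {d : α → ℝ≥0∞} {f : DAT α → ℝ≥0∞} {T : DAT α}
    (h : IsExactTA d f T) : IsTA d f T := by
  intro v hv
  have hv' := h v hv
  match v with
  | .bas a => exact hv'
  | .or cs => exact le_of_eq hv'.symm
  | .and cs => exact le_of_eq hv'.symm
  | .sand cs =>
      obtain ⟨h1, h2⟩ := hv'
      refine ⟨fun c hc => ?_, h1⟩
      by_cases hb : SandBad d f cs
      · rw [h1 hb]; exact le_top
      · rw [h2 hb c hc]

lemma isTA_child_or {d : α → ℝ≥0∞} {f : DAT α → ℝ≥0∞} {cs : List (DAT α)} {c : DAT α}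
    (h : IsTA d f (.or cs)) (hc : c ∈ cs) : IsTA d f c :=
  fun v hv => h v (Subnode.or hc hv)

lemma isTA_child_and {d : α → ℝ≥0∞} {f : DAT α → ℝ≥0∞} {cs : List (DAT α)} {c : DAT α}
    (h : IsTA d f (.and cs)) (hc : c ∈ cs) : IsTA d f c :=
  fun v hv => h v (Subnode.and hc hv)

lemma isTA_child_sand {d : α → ℝ≥0∞} {f : DAT α → ℝ≥0∞} {cs : List (DAT α)} {c : DAT α}
    (h : IsTA d f (.sand cs)) (hc : c ∈ cs) : IsTA d f c :=
  fun v hv => h v (Subnode.sand hc hv)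

lemma exact_le (d : α → ℝ≥0∞) (f : DAT α → ℝ≥0∞) :
    ∀ v : DAT α, IsTA d f v → exact d f v ≤ f v
  | .bas a, _ => le_of_eq (exact_bas d f a)
  | .or cs, h => by
      have hloc : (⨅ c ∈ cs, f c) ≤ f (.or cs) := h _ (Subnode.refl _)
      refine le_trans ?_ hloc
      rw [exact_or]
      exact iInf_mono fun c => iInf_mono fun hc =>
        exact_le d f c (isTA_child_or h hc)
  | .and cs, h => by
      have hloc : (⨆ c ∈ cs, f c) ≤ f (.and cs) := h _ (Subnode.refl _)
      refine le_trans ?_ hloc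
      rw [exact_and]
      exact iSup_mono fun c => iSup_mono fun hc =>
        exact_le d f c (isTA_child_and h hc)
  | .sand cs, h => by
      obtain ⟨h1, h2⟩ := h _ (Subnode.refl _)
      have hch : ∀ c ∈ cs, exact d f c ≤ f c := fun c hc =>
        exact_le d f c (isTA_child_sand h hc)
      by_cases hb : SandBad d (exact d f) cs
      · have hb' : SandBad d f cs := by
          rcases hb with ⟨c, hc, hct⟩ | ⟨i, hi, a, a', ha, ha', hlt, hfin⟩
          · exact Or.inl ⟨c, hc, top_le_iff.1 (hct ▸ hch c hc)⟩
          · exact Or.inr ⟨i, hi, a, a', ha, ha', by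
              rwa [exact_bas, exact_bas] at hlt, by rwa [exact_bas] at hfin⟩
        rw [h2 hb']
        exact le_top
      · match hlast : cs.getLast? with
        | none =>
            have : cs = [] := List.getLast?_eq_none_iff.1 hlast
            subst this
            rw [exact, if_neg (fun h' => hb ((sandBad_exact_iff d f []).2 h'))]
            simp
        | some c =>
            rw [exact_sand_good d f cs hb hlast]
            exact le_trans (hch c (List.mem_of_getLast? hlast)) (h1 c hlast)
  decreasing_by all_goals (simp_wf; have := List.sizeOf_lt_of_mem hc; omega)

end DAT

/-- every time assignment is dominated at the root by an exact
one, so the two minima agree. -/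
theorem stmt10 {α : Type} (T : DAT α) (d : α → ℝ≥0∞) (hd : ∀ a, d a ≠ ⊤) :
    (∀ f, DAT.IsTA d f T → ∃ f', DAT.IsExactTA d f' T ∧ f' T ≤ f T) ∧
    (⨅ f ∈ {f | DAT.IsTA d f T}, f T) =
      ⨅ f ∈ {f | DAT.IsExactTA d f T}, f T := by
  constructor
  · intro f hf
    exact ⟨DAT.exact d f, DAT.isExactTA_exact d f T hf, DAT.exact_le d f T hf⟩
  · apply le_antisymm
    · exact le_iInf₂ fun f hf => iInf₂_le f (DAT.isTA_of_isExactTA hf)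
    · refine le_iInf₂ fun f hf => ?_
      exact le_trans (iInf₂_le (DAT.exact d f) (DAT.isExactTA_exact d f T hf))
        (DAT.exact_le d f T hf)
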